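/- arXiv:1905.09884 — 3 statements merged into one kernel-verified Lean document; each statement's English description precedes it below -/
import Mathlib

section
/- Let v, w ∈ ℝ^m with w ≥ v componentwise and let k ≤ m. Then max { (1−u)·v + u·w : u ∈ {0,1}^m, ∑ᵢ uᵢ ≤ k } = ∑ᵢ vᵢ + s_k(w − v), where s_k denotes the sum of the k largest entries. -/
open Finset

/-- Sum of the `k` largest entries of `z ∈ ℝ^m`. -/
noncomputable def topkSum {m : ℕ} (k : ℕ) (hk : k ≤ m) (z : Fin m → ℝ) : ℝ :=
  ((Finset.univ : Finset (Fin m)).powersetCard k).sup'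
    (Finset.powersetCard_nonempty.mpr (by simpa using hk)) (fun I => ∑ i ∈ I, z i)

lemma indicator_value_sum {m : ℕ} (I : Finset (Fin m)) (v w : Fin m → ℝ) :
    ∑ i, ((1 - (if i ∈ I then (1:ℝ) else 0)) * v i + (if i ∈ I then (1:ℝ) else 0) * w i)
      = ∑ i, v i + ∑ i ∈ I, (w i - v i) := by
  have : ∀ i, (1 - (if i ∈ I then (1:ℝ) else 0)) * v i + (if i ∈ I then (1:ℝ) else 0) * w i
      = v i + (if i ∈ I then w i - v i else 0) := by
    intro i; by_cases h : i ∈ I <;> simp [h]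
  simp_rw [this]
  rw [Finset.sum_add_distrib, Finset.sum_ite_mem, Finset.univ_inter]

/-- Boolean reformulation of sparse Bernoulli naive Bayes: for `w ≥ v`
componentwise, `max { (1-u)·v + u·w : u ∈ {0,1}^m, ∑ u i ≤ k }
= ∑ v + s_k(w - v)`. -/
theorem boolean_reformulation (m k : ℕ) (hk : k ≤ m) (v w : Fin m → ℝ)
    (hvw : ∀ i, v i ≤ w i) :
    IsGreatest {t : ℝ | ∃ u : Fin m → ℝ, (∀ i, u i = 0 ∨ u i = 1) ∧
        (∑ i, u i) ≤ k ∧ t = ∑ i, ((1 - u i) * v i + u i * w i)}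
      (∑ i, v i + topkSum k hk (fun i => w i - v i)) := by
  have hne : ((Finset.univ : Finset (Fin m)).powersetCard k).Nonempty :=
    Finset.powersetCard_nonempty.mpr (by simpa using hk)
  constructor
  · -- membership: pick the argmax set I
    obtain ⟨I, hI, hEq⟩ := Finset.exists_mem_eq_sup' hne (fun I => ∑ i ∈ I, (w i - v i))
    have hIcard : I.card = k := (Finset.mem_powersetCard.mp hI).2
    refine ⟨fun i => if i ∈ I then 1 else 0, fun i => by by_cases h : i ∈ I <;> simp [h], ?_, ?_⟩
    · have : ∑ i, (if i ∈ I then (1:ℝ) else 0) = I.card := by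
        rw [Finset.sum_ite_mem, Finset.univ_inter]; simp
      rw [this, hIcard]
    · rw [indicator_value_sum, topkSum, ← hEq]
  · -- upper bound
    rintro t ⟨u, hu01, huk, rfl⟩
    set S : Finset (Fin m) := Finset.univ.filter (fun i => u i = 1) with hS
    have husum : ∑ i, u i = S.card := by
      rw [hS, Finset.card_filter]
      push_cast
      apply Finset.sum_congr rfl
      intro i _
      rcases hu01 i with h | h <;> simp [h]
    have hScard : S.card ≤ k := by
      have := husum ▸ huk
      exact_mod_cast this
    obtain ⟨I, hSI, hIcard⟩ := Finset.exists_superset_card_eq hScard (by simpa using hk)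
    have hval : ∑ i, ((1 - u i) * v i + u i * w i) = ∑ i, v i + ∑ i ∈ S, (w i - v i) := by
      have : u = fun i => if i ∈ S then (1:ℝ) else 0 := by
        funext i
        rcases hu01 i with h | h <;> simp [hS, h]
      rw [this, indicator_value_sum]
    rw [hval]
    have h1 : ∑ i ∈ S, (w i - v i) ≤ ∑ i ∈ I, (w i - v i) :=
      Finset.sum_le_sum_of_subset_of_nonneg hSI (fun i _ _ => by linarith [hvw i])
    have h2 : ∑ i ∈ I, (w i - v i) ≤ topkSum k hk (fun i => w i - v i) :=
      Finset.le_sup' (α := ℝ) (fun J => ∑ i ∈ J, (w i - v i))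
        (Finset.mem_powersetCard.mpr ⟨Finset.subset_univ I, hIcard⟩)
    linarith
end

section
/- Consider the sparse Bernoulli naive Bayes problem: maximize ∑ᵢ [f⁺ᵢ log θ⁺ᵢ + (n₊ − f⁺ᵢ) log(1−θ⁺ᵢ) + f⁻ᵢ log θ⁻ᵢ + (n₋ − f⁻ᵢ) log(1−θ⁻ᵢ)] over θ⁺, θ⁻ ∈ (0,1)^m subject to at most k indices i having θ⁺ᵢ ≠ θ⁻ᵢ. Assume 0 < f⁺ᵢ < n₊ and 0 < f⁻ᵢ < n₋ for all i and set n = n₊ + n₋. Then the optimal value equals ∑ᵢ vᵢ + s_k(w − v), where vᵢ = (f⁺ᵢ+f⁻ᵢ) log((f⁺ᵢ+f⁻ᵢ)/n) + (n−f⁺ᵢ−f⁻ᵢ) log(1 − (f⁺ᵢ+f⁻ᵢ)/n), wᵢ = f⁺ᵢ log(f⁺ᵢ/n₊) + (n₊−f⁺ᵢ) log(1 − f⁺ᵢ/n₊) + f⁻ᵢ log(f⁻ᵢ/n₋) + (n₋−f⁻ᵢ) log(1 − f⁻ᵢ/n₋), and s_k denotes the sum of the k largest entries. -/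
open Finset Real Set
open scoped Classical

lemma ber_le {a b θ : ℝ} (ha : 0 < a) (hab : a < b) (hθ : 0 < θ) (hθ1 : θ < 1) :
    a * Real.log θ + (b - a) * Real.log (1 - θ) ≤
      a * Real.log (a / b) + (b - a) * Real.log (1 - a / b) := by
  have hb : 0 < b := ha.trans hab
  have hba : 0 < b - a := by linarith
  have h1 : (1:ℝ) - a / b = (b - a) / b := by field_simp
  have e1 : θ / (a / b) = θ * b / a := by field_simp
  have e2 : (1 - θ) / ((b - a) / b) = (1 - θ) * b / (b - a) := by field_simp
  have k1 : Real.log θ - Real.log (a / b) ≤ θ * b / a - 1 := by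
    have h := Real.log_le_sub_one_of_pos (div_pos hθ (div_pos ha hb))
    rwa [Real.log_div hθ.ne' (div_pos ha hb).ne', e1] at h
  have k2 : Real.log (1 - θ) - Real.log ((b - a) / b) ≤ (1 - θ) * b / (b - a) - 1 := by
    have h := Real.log_le_sub_one_of_pos
      (div_pos (by linarith : (0:ℝ) < 1 - θ) (div_pos hba hb))
    rwa [Real.log_div (by linarith : (1:ℝ) - θ ≠ 0) (div_pos hba hb).ne', e2] at h
  have m1 : a * Real.log θ - a * Real.log (a / b) ≤ θ * b - a := by
    have h := mul_le_mul_of_nonneg_left k1 ha.le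
    have e : a * (θ * b / a - 1) = θ * b - a := by field_simp
    have e' : a * (Real.log θ - Real.log (a / b))
        = a * Real.log θ - a * Real.log (a / b) := by ring
    linarith
  have m2 : (b - a) * Real.log (1 - θ) - (b - a) * Real.log ((b - a) / b)
      ≤ (1 - θ) * b - (b - a) := by
    have h := mul_le_mul_of_nonneg_left k2 hba.le
    have e : (b - a) * ((1 - θ) * b / (b - a) - 1) = (1 - θ) * b - (b - a) := by
      field_simp
    have e' : (b - a) * (Real.log (1 - θ) - Real.log ((b - a) / b))
        = (b - a) * Real.log (1 - θ) - (b - a) * Real.log ((b - a) / b) := by ring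
    linarith
  rw [h1]
  linarith

lemma sum_ite_split {m : ℕ} (I : Finset (Fin m)) (g h : Fin m → ℝ) :
    ∑ i, (if i ∈ I then g i else h i) = ∑ i, h i + ∑ i ∈ I, (g i - h i) := by
  rw [← Finset.sum_sdiff (Finset.subset_univ I)
      (f := fun i => if i ∈ I then g i else h i),
    ← Finset.sum_sdiff (Finset.subset_univ I) (f := h)]
  have h1 : ∑ i ∈ Finset.univ \ I, (if i ∈ I then g i else h i)
      = ∑ i ∈ Finset.univ \ I, h i :=
    Finset.sum_congr rfl (fun i hi => by rw [if_neg (Finset.mem_sdiff.mp hi).2])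
  have h2 : ∑ i ∈ I, (if i ∈ I then g i else h i) = ∑ i ∈ I, g i :=
    Finset.sum_congr rfl (fun i hi => by rw [if_pos hi])
  rw [h1, h2, Finset.sum_sub_distrib]
  ring

/-- Sparse Bernoulli naive Bayes: the optimal value of the cardinality
constrained maximum likelihood problem equals `∑ v + s_k(w - v)`. -/
theorem sparse_bernoulli_nb (m k : ℕ) (hk : k ≤ m) (np nm : ℝ)
    (fp fm : Fin m → ℝ) (hnp : 0 < np) (hnm : 0 < nm)
    (hfp : ∀ i, 0 < fp i ∧ fp i < np) (hfm : ∀ i, 0 < fm i ∧ fm i < nm) :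
    let n := np + nm
    let v : Fin m → ℝ := fun i =>
      (fp i + fm i) * Real.log ((fp i + fm i) / n) +
        (n - fp i - fm i) * Real.log (1 - (fp i + fm i) / n)
    let w : Fin m → ℝ := fun i =>
      fp i * Real.log (fp i / np) + (np - fp i) * Real.log (1 - fp i / np) +
        (fm i * Real.log (fm i / nm) + (nm - fm i) * Real.log (1 - fm i / nm))
    IsGreatest {t : ℝ | ∃ θp θm : Fin m → ℝ,
        (∀ i, θp i ∈ Ioo (0 : ℝ) 1) ∧ (∀ i, θm i ∈ Ioo (0 : ℝ) 1) ∧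
        (Finset.univ.filter (fun i => θp i ≠ θm i)).card ≤ k ∧
        t = ∑ i, (fp i * Real.log (θp i) + (np - fp i) * Real.log (1 - θp i) +
          (fm i * Real.log (θm i) + (nm - fm i) * Real.log (1 - θm i)))}
      (∑ i, v i + topkSum k hk (fun i => w i - v i)) := by
  intro n v w
  have hn : 0 < n := by simp only [n]; linarith
  have hcp : ∀ i, 0 < (fp i + fm i) / n ∧ (fp i + fm i) / n < 1 := by
    intro i
    constructor
    · have := (hfp i).1; have := (hfm i).1; positivity
    · rw [div_lt_one hn]
      have := (hfp i).2; have := (hfm i).2; simp only [n]; linarith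
  have term_le_w : ∀ (θp θm : Fin m → ℝ) i, θp i ∈ Ioo (0:ℝ) 1 → θm i ∈ Ioo (0:ℝ) 1 →
      fp i * Real.log (θp i) + (np - fp i) * Real.log (1 - θp i) +
        (fm i * Real.log (θm i) + (nm - fm i) * Real.log (1 - θm i)) ≤ w i := by
    intro θp θm i h1 h2
    have b1 := ber_le (hfp i).1 (hfp i).2 h1.1 h1.2
    have b2 := ber_le (hfm i).1 (hfm i).2 h2.1 h2.2
    simp only [w]
    linarith
  have term_le_v : ∀ (θp θm : Fin m → ℝ) i, θp i ∈ Ioo (0:ℝ) 1 → θp i = θm i →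
      fp i * Real.log (θp i) + (np - fp i) * Real.log (1 - θp i) +
        (fm i * Real.log (θm i) + (nm - fm i) * Real.log (1 - θm i)) ≤ v i := by
    intro θp θm i h1 he
    have hab : fp i + fm i < n := by
      have := (hfp i).2; have := (hfm i).2; simp only [n]; linarith
    have b := ber_le (a := fp i + fm i) (b := n)
      (by have := (hfp i).1; have := (hfm i).1; linarith) hab h1.1 h1.2
    simp only [v, ← he]
    nlinarith [b]
  have v_le_w : ∀ i, v i ≤ w i := by
    intro i
    have hmem : (fp i + fm i) / n ∈ Ioo (0:ℝ) 1 := ⟨(hcp i).1, (hcp i).2⟩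
    have h := term_le_w (fun _ => (fp i + fm i) / n) (fun _ => (fp i + fm i) / n) i hmem hmem
    have e : fp i * Real.log ((fp i + fm i) / n) +
        (np - fp i) * Real.log (1 - (fp i + fm i) / n) +
        (fm i * Real.log ((fp i + fm i) / n) +
          (nm - fm i) * Real.log (1 - (fp i + fm i) / n)) = v i := by
      simp only [v, n]; ring
    rw [← e]
    exact h
  constructor
  · -- membership
    obtain ⟨I, hI, hIeq⟩ := Finset.exists_mem_eq_sup'
      (s := (Finset.univ : Finset (Fin m)).powersetCard k)
      (Finset.powersetCard_nonempty.mpr (by simpa using hk))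
      (fun I : Finset (Fin m) => ∑ i ∈ I, (fun i => w i - v i) i)
    have hIcard : I.card = k := (Finset.mem_powersetCard.mp hI).2
    refine ⟨fun i => if i ∈ I then fp i / np else (fp i + fm i) / n,
      fun i => if i ∈ I then fm i / nm else (fp i + fm i) / n, ?_, ?_, ?_, ?_⟩
    · intro i; by_cases h : i ∈ I <;> simp only [h, if_true, if_false]
      · exact ⟨by have := (hfp i).1; positivity, (div_lt_one hnp).mpr (hfp i).2⟩
      · exact ⟨(hcp i).1, (hcp i).2⟩
    · intro i; by_cases h : i ∈ I <;> simp only [h, if_true, if_false]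
      · exact ⟨by have := (hfm i).1; positivity, (div_lt_one hnm).mpr (hfm i).2⟩
      · exact ⟨(hcp i).1, (hcp i).2⟩
    · calc (Finset.univ.filter _).card ≤ I.card := by
            apply Finset.card_le_card
            intro i hi
            rw [Finset.mem_filter] at hi
            by_contra h
            exact hi.2 (by simp [h])
        _ ≤ k := hIcard.le
    · have hsplit : ∀ i : Fin m,
          (fp i * Real.log (if i ∈ I then fp i / np else (fp i + fm i) / n) +
            (np - fp i) * Real.log (1 - if i ∈ I then fp i / np else (fp i + fm i) / n) +
            (fm i * Real.log (if i ∈ I then fm i / nm else (fp i + fm i) / n) +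
              (nm - fm i) * Real.log (1 - if i ∈ I then fm i / nm else (fp i + fm i) / n)))
          = if i ∈ I then w i else v i := by
        intro i
        by_cases h : i ∈ I
        · simp [h, w]
        · simp only [h, if_false]
          simp only [v, n]
          ring
      rw [Finset.sum_congr rfl (fun i _ => hsplit i), sum_ite_split I w v]
      have : topkSum k hk (fun i => w i - v i) = ∑ i ∈ I, (w i - v i) := by
        simpa only [topkSum] using hIeq
      rw [this]
  · -- upper bound
    rintro t ⟨θp, θm, hp, hm, hcard, ht⟩
    set S := Finset.univ.filter (fun i => θp i ≠ θm i) with hS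
    have step1 : t ≤ ∑ i, (if i ∈ S then w i else v i) := by
      rw [ht]
      apply Finset.sum_le_sum
      intro i _
      by_cases h : i ∈ S
      · simp only [h, if_true]
        exact term_le_w θp θm i (hp i) (hm i)
      · simp only [h, if_false]
        have he : θp i = θm i := by
          by_contra hne
          exact h (by simp [hS, hne])
        exact term_le_v θp θm i (hp i) he
    have step2 := sum_ite_split S w v
    have step3 : ∑ i ∈ S, (w i - v i) ≤ topkSum k hk (fun i => w i - v i) := by
      obtain ⟨U, hSU, _, hUcard⟩ := Finset.exists_subsuperset_card_eq
        (Finset.subset_univ S) hcard (by simpa using hk)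
      have h4 : ∑ i ∈ S, (w i - v i) ≤ ∑ i ∈ U, (w i - v i) := by
        apply Finset.sum_le_sum_of_subset_of_nonneg hSU
        intro i _ _
        have := v_le_w i; linarith
      have h5 : ∑ i ∈ U, (w i - v i) ≤ topkSum k hk (fun i => w i - v i) := by
        apply Finset.le_sup' (f := fun I => ∑ i ∈ I, (fun i => w i - v i) i)
        exact Finset.mem_powersetCard.mpr ⟨Finset.subset_univ U, hUcard⟩
      exact h4.trans h5
    linarith
end

section
/- An optimal solution to the cardinality-constrained Bernoulli naive Bayes problem (maximizing the Bernoulli log-likelihood subject to ‖θ⁺ − θ⁻‖₀ ≤ k) is given by: choose an index set I consisting of k indices with the largest values of wᵢ − vᵢ, set θ±ᵢ = f±ᵢ/n± for i ∈ I, and θ⁺ᵢ = θ⁻ᵢ = (f⁺ᵢ+f⁻ᵢ)/n for i ∉ I. This solution achieves the optimal value and satisfies the cardinality constraint. -/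
open Finset Real Set
open scoped Classical

/-- Gibbs-type inequality: `f/n` maximizes `f log t + (n-f) log (1-t)` on `(0,1)`. -/
lemma gibbs_max {f n t : ℝ} (hf : 0 < f) (hfn : f < n) (ht : 0 < t) (ht1 : t < 1) :
    f * Real.log t + (n - f) * Real.log (1 - t) ≤
      f * Real.log (f / n) + (n - f) * Real.log (1 - f / n) := by
  have hn : 0 < n := hf.trans hfn
  have ha : 0 < f / n := by positivity
  have ha1 : f / n < 1 := by rw [div_lt_one hn]; exact hfn
  have hd1 : Real.log t - Real.log (f / n) = Real.log (t / (f / n)) :=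
    (Real.log_div ht.ne' ha.ne').symm
  have hd2 : Real.log (1 - t) - Real.log (1 - f / n) = Real.log ((1 - t) / (1 - f / n)) :=
    (Real.log_div (by linarith) (by linarith)).symm
  have hb1 : Real.log (t / (f / n)) ≤ t / (f / n) - 1 :=
    Real.log_le_sub_one_of_pos (div_pos ht ha)
  have hb2 : Real.log ((1 - t) / (1 - f / n)) ≤ (1 - t) / (1 - f / n) - 1 :=
    Real.log_le_sub_one_of_pos (div_pos (by linarith) (by linarith))
  have e1 : f * (t / (f / n) - 1) = t * n - f := by field_simp
  have e2 : (n - f) * ((1 - t) / (1 - f / n) - 1) = (1 - t) * n - (n - f) := by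
    have h1mfn : 1 - f / n = (n - f) / n := by field_simp
    have hnf : n - f ≠ 0 := (by linarith : (0:ℝ) < n - f).ne'
    rw [h1mfn]
    field_simp
  have k1 : f * (Real.log t - Real.log (f / n)) ≤ t * n - f := by
    rw [hd1, ← e1]
    exact mul_le_mul_of_nonneg_left hb1 hf.le
  have k2 : (n - f) * (Real.log (1 - t) - Real.log (1 - f / n)) ≤ (1 - t) * n - (n - f) := by
    rw [hd2, ← e2]
    exact mul_le_mul_of_nonneg_left hb2 (by linarith)
  nlinarith [k1, k2]

/-- If every element of `I` dominates every element outside `I`, then `I` maximizes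
the sum among sets of its cardinality. -/
lemma topset_dominates {m : ℕ} (z : Fin m → ℝ) (I J : Finset (Fin m))
    (hIJ : I.card = J.card) (hdom : ∀ i ∈ I, ∀ j ∉ I, z j ≤ z i) :
    ∑ j ∈ J, z j ≤ ∑ i ∈ I, z i := by
  have hcard : (J \ I).card = (I \ J).card := Finset.card_sdiff_comm hIJ.symm
  have key : ∑ j ∈ J \ I, z j ≤ ∑ i ∈ I \ J, z i := by
    rw [← Finset.sum_coe_sort (J \ I), ← Finset.sum_coe_sort (I \ J)]
    let e := Finset.equivOfCardEq hcard
    rw [← Equiv.sum_comp e (fun i : ↥(I \ J) => z i)]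
    apply Finset.sum_le_sum
    intro x _
    have hx : (x : Fin m) ∉ I := (Finset.mem_sdiff.mp x.2).2
    have he : ((e x : ↥(I \ J)) : Fin m) ∈ I := (Finset.mem_sdiff.mp (e x).2).1
    exact hdom _ he _ hx
  have h1 : ∑ i ∈ J ∩ I, z i + ∑ i ∈ J \ I, z i = ∑ i ∈ J, z i :=
    Finset.sum_inter_add_sum_sdiff J I z
  have h2 : ∑ i ∈ I ∩ J, z i + ∑ i ∈ I \ J, z i = ∑ i ∈ I, z i :=
    Finset.sum_inter_add_sum_sdiff I J z
  have h3 : ∑ i ∈ J ∩ I, z i = ∑ i ∈ I ∩ J, z i := by rw [Finset.inter_comm]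
  linarith

/-- An explicit optimizer for sparse Bernoulli naive Bayes: take a set `I` of
`k` indices with the largest values of `w i - v i`, set `θ±ᵢ = f±ᵢ/n±` on `I`
and `θ⁺ᵢ = θ⁻ᵢ = (f⁺ᵢ + f⁻ᵢ)/n` off `I`.  This is feasible for the
cardinality constraint and achieves the optimal value, dominating every
feasible point. -/
theorem sparse_bernoulli_nb_solution (m k : ℕ) (hk : k ≤ m) (np nm : ℝ)
    (fp fm : Fin m → ℝ) (hnp : 0 < np) (hnm : 0 < nm)
    (hfp : ∀ i, 0 < fp i ∧ fp i < np) (hfm : ∀ i, 0 < fm i ∧ fm i < nm)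
    (I : Finset (Fin m)) (hI : I.card = k)
    (hItop : ∀ i ∈ I, ∀ j ∉ I, (fp j * Real.log (fp j / np) +
        (np - fp j) * Real.log (1 - fp j / np) +
        (fm j * Real.log (fm j / nm) + (nm - fm j) * Real.log (1 - fm j / nm))) -
        ((fp j + fm j) * Real.log ((fp j + fm j) / (np + nm)) +
          (np + nm - fp j - fm j) * Real.log (1 - (fp j + fm j) / (np + nm))) ≤
      (fp i * Real.log (fp i / np) +
        (np - fp i) * Real.log (1 - fp i / np) +
        (fm i * Real.log (fm i / nm) + (nm - fm i) * Real.log (1 - fm i / nm))) -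
        ((fp i + fm i) * Real.log ((fp i + fm i) / (np + nm)) +
          (np + nm - fp i - fm i) * Real.log (1 - (fp i + fm i) / (np + nm)))) :
    let n := np + nm
    let θp : Fin m → ℝ := fun i => if i ∈ I then fp i / np else (fp i + fm i) / n
    let θm : Fin m → ℝ := fun i => if i ∈ I then fm i / nm else (fp i + fm i) / n
    let L : (Fin m → ℝ) → (Fin m → ℝ) → ℝ := fun t1 t2 =>
      ∑ i, (fp i * Real.log (t1 i) + (np - fp i) * Real.log (1 - t1 i) +
        (fm i * Real.log (t2 i) + (nm - fm i) * Real.log (1 - t2 i)))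
    let v : Fin m → ℝ := fun i =>
      (fp i + fm i) * Real.log ((fp i + fm i) / n) +
        (n - fp i - fm i) * Real.log (1 - (fp i + fm i) / n)
    let w : Fin m → ℝ := fun i =>
      fp i * Real.log (fp i / np) + (np - fp i) * Real.log (1 - fp i / np) +
        (fm i * Real.log (fm i / nm) + (nm - fm i) * Real.log (1 - fm i / nm))
    (Finset.univ.filter (fun i => θp i ≠ θm i)).card ≤ k ∧
    L θp θm = ∑ i, v i + topkSum k hk (fun i => w i - v i) ∧
    (∀ t1 t2 : Fin m → ℝ, (∀ i, t1 i ∈ Ioo (0 : ℝ) 1) →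
      (∀ i, t2 i ∈ Ioo (0 : ℝ) 1) →
      (Finset.univ.filter (fun i => t1 i ≠ t2 i)).card ≤ k →
      L t1 t2 ≤ L θp θm) := by
  intro n θp θm L v w
  have hn : 0 < n := by positivity
  -- basic positivity facts
  have hc : ∀ i, 0 < (fp i + fm i) / n ∧ (fp i + fm i) / n < 1 := by
    intro i
    constructor
    · have := (hfp i).1; have := (hfm i).1; positivity
    · rw [div_lt_one hn]
      have := (hfp i).2; have := (hfm i).2; simp only [n]; linarith
  -- v ≤ w pointwise
  have hvw : ∀ i, v i ≤ w i := by
    intro i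
    have h1 := gibbs_max (f := fp i) (n := np) (hfp i).1 (hfp i).2 (hc i).1 (hc i).2
    have h2 := gibbs_max (f := fm i) (n := nm) (hfm i).1 (hfm i).2 (hc i).1 (hc i).2
    have hv : v i = (fp i * Real.log ((fp i + fm i) / n) +
        (np - fp i) * Real.log (1 - (fp i + fm i) / n)) +
        (fm i * Real.log ((fp i + fm i) / n) +
        (nm - fm i) * Real.log (1 - (fp i + fm i) / n)) := by
      simp only [v]; ring
    rw [hv]
    simp only [w]
    exact add_le_add h1 h2
  -- free-parameter bound
  have hfree : ∀ (t1 t2 : Fin m → ℝ), (∀ i, t1 i ∈ Ioo (0:ℝ) 1) →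
      (∀ i, t2 i ∈ Ioo (0:ℝ) 1) → ∀ i,
      fp i * Real.log (t1 i) + (np - fp i) * Real.log (1 - t1 i) +
        (fm i * Real.log (t2 i) + (nm - fm i) * Real.log (1 - t2 i)) ≤ w i := by
    intro t1 t2 h1 h2 i
    exact add_le_add
      (gibbs_max (hfp i).1 (hfp i).2 (h1 i).1 (h1 i).2)
      (gibbs_max (hfm i).1 (hfm i).2 (h2 i).1 (h2 i).2)
  -- tied-parameter bound
  have htied : ∀ (t1 t2 : Fin m → ℝ), (∀ i, t1 i ∈ Ioo (0:ℝ) 1) →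
      ∀ i, t1 i = t2 i →
      fp i * Real.log (t1 i) + (np - fp i) * Real.log (1 - t1 i) +
        (fm i * Real.log (t2 i) + (nm - fm i) * Real.log (1 - t2 i)) ≤ v i := by
    intro t1 t2 h1 i he
    have hfsum : 0 < fp i + fm i := by have := (hfp i).1; have := (hfm i).1; linarith
    have hfn : fp i + fm i < n := by
      have := (hfp i).2; have := (hfm i).2; simp only [n]; linarith
    have := gibbs_max (f := fp i + fm i) (n := n) hfsum hfn (h1 i).1 (h1 i).2
    have hrw : fp i * Real.log (t1 i) + (np - fp i) * Real.log (1 - t1 i) +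
        (fm i * Real.log (t2 i) + (nm - fm i) * Real.log (1 - t2 i)) =
        (fp i + fm i) * Real.log (t1 i) + (n - (fp i + fm i)) * Real.log (1 - t1 i) := by
      rw [← he]; simp only [n]; ring
    rw [hrw]
    simp only [v]
    calc (fp i + fm i) * Real.log (t1 i) + (n - (fp i + fm i)) * Real.log (1 - t1 i)
        ≤ (fp i + fm i) * Real.log ((fp i + fm i) / n) +
          (n - (fp i + fm i)) * Real.log (1 - (fp i + fm i) / n) := this
      _ = (fp i + fm i) * Real.log ((fp i + fm i) / n) +
          (n - fp i - fm i) * Real.log (1 - (fp i + fm i) / n) := by ring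
  -- the value of L at the candidate
  have hIcard : I ∈ (Finset.univ : Finset (Fin m)).powersetCard k := by
    rw [Finset.mem_powersetCard]
    exact ⟨Finset.subset_univ I, hI⟩
  have hdom : ∀ i ∈ I, ∀ j ∉ I, (w j - v j) ≤ (w i - v i) := by
    intro i hi j hj
    exact hItop i hi j hj
  have htopk : topkSum k hk (fun i => w i - v i) = ∑ i ∈ I, (w i - v i) := by
    apply le_antisymm
    · apply Finset.sup'_le
      intro J hJ
      rw [Finset.mem_powersetCard] at hJ
      exact topset_dominates _ I J (by rw [hI, hJ.2]) hdom
    · exact Finset.le_sup' (f := fun J => ∑ i ∈ J, (w i - v i)) hIcard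
  have hLval : L θp θm = ∑ i, v i + topkSum k hk (fun i => w i - v i) := by
    have step1 : L θp θm = ∑ i, (if i ∈ I then w i else v i) := by
      apply Finset.sum_congr rfl
      intro i _
      by_cases hi : i ∈ I
      · simp only [θp, θm, w, if_pos hi]
      · simp only [θp, θm, v, if_neg hi]
        ring
    have step2 : ∑ i, (if i ∈ I then w i else v i) =
        ∑ i, (v i + if i ∈ I then w i - v i else 0) := by
      apply Finset.sum_congr rfl
      intro i _
      split <;> ring
    rw [step1, step2, Finset.sum_add_distrib, htopk]
    congr 1
    rw [Finset.sum_ite_mem, Finset.univ_inter]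
  refine ⟨?_, hLval, ?_⟩
  · -- cardinality
    rw [← hI]
    apply Finset.card_le_card
    intro i hi
    simp only [Finset.mem_filter, Finset.mem_univ, true_and] at hi
    by_contra hiI
    apply hi
    simp only [θp, θm, if_neg hiI]
  · -- optimality
    intro t1 t2 ht1 ht2 hcard
    set J := Finset.univ.filter (fun i => t1 i ≠ t2 i) with hJ
    have hbound : L t1 t2 ≤ ∑ i, (if i ∈ J then w i else v i) := by
      apply Finset.sum_le_sum
      intro i _
      by_cases hi : i ∈ J
      · rw [if_pos hi]; exact hfree t1 t2 ht1 ht2 i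
      · rw [if_neg hi]
        apply htied t1 t2 ht1 i
        by_contra hne
        exact hi (Finset.mem_filter.mpr ⟨Finset.mem_univ i, hne⟩)
    have hsplit : ∑ i, (if i ∈ J then w i else v i) =
        ∑ i, v i + ∑ i ∈ J, (w i - v i) := by
      have : ∑ i, (if i ∈ J then w i else v i) =
          ∑ i, (v i + if i ∈ J then w i - v i else 0) := by
        apply Finset.sum_congr rfl; intro i _; split <;> ring
      rw [this, Finset.sum_add_distrib]
      congr 1
      rw [Finset.sum_ite_mem, Finset.univ_inter]
    -- enlarge J to cardinality k
    obtain ⟨J', hJJ', hJ'card⟩ := Finset.exists_superset_card_eq hcard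
      (by simpa using hk)
    have h1 : ∑ i ∈ J, (w i - v i) ≤ ∑ i ∈ J', (w i - v i) := by
      apply Finset.sum_le_sum_of_subset_of_nonneg hJJ'
      intro i _ _
      linarith [hvw i]
    have h2 : ∑ i ∈ J', (w i - v i) ≤ topkSum k hk (fun i => w i - v i) := by
      apply Finset.le_sup' (f := fun S => ∑ i ∈ S, (w i - v i))
      rw [Finset.mem_powersetCard]
      exact ⟨Finset.subset_univ J', hJ'card⟩
    rw [hLval]
    linarith
end
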